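/- Suppose every service s is (β, ζ)-elastic, meaning Σ_s ≥ β r_s − ζ Σ_{s'≠s} r_{s'}, with all rewards r_s ∈ [R_min, R_max], 0 < R_min ≤ R_max, and β/ζ > (|S|−1) R_max/R_min. Then for any pair of sets A ⊆ S, B ⊆ V and any service s ∈ A, if r_s ≥ (ζ R_{−s} + max_{t ∈ A} Σ_{v ∈ B ∩ ∂t} σ_v)/(α_s β), where R_{−s} = Σ_{s'≠s} r_{s'}, then Σ_{v ∈ B ∩ ∂s} σ_v ≤ α_s Σ_s. -/
import Mathlib


open Finset

/-- (β,ζ)-elasticity with sufficiently high rewards implies the α-security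
condition for any service s ∈ A. -/
theorem stmt_1 {S V : Type*} [Fintype S] [DecidableEq S] [DecidableEq V]
    (σ : V → ℝ) (hσ : ∀ v, 0 ≤ σ v)
    (α : S → ℝ) (hα : ∀ s, α s ∈ Set.Ioc (0:ℝ) 1)
    (bd : S → Finset V) (r : S → ℝ)
    (Rmin Rmax : ℝ) (hRmin : 0 < Rmin) (hRR : Rmin ≤ Rmax)
    (hr : ∀ s, r s ∈ Set.Icc Rmin Rmax)
    (β ζ : ℝ) (hβ : 0 < β) (hζ : 0 < ζ)
    (helastic : ∀ s : S, ∑ v ∈ bd s, σ v ≥ β * r s - ζ * ∑ s' ∈ univ.erase s, r s')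
    (hratio : β / ζ > ((Fintype.card S : ℝ) - 1) * Rmax / Rmin)
    (A : Finset S) (B : Finset V) (s : S) (hs : s ∈ A)
    (hrs : r s ≥ (ζ * (∑ s' ∈ univ.erase s, r s') +
        A.sup' ⟨s, hs⟩ (fun t => ∑ v ∈ B ∩ bd t, σ v)) / (α s * β)) :
    ∑ v ∈ B ∩ bd s, σ v ≤ α s * ∑ v ∈ bd s, σ v := by
  obtain ⟨hα0, hα1⟩ := hα s
  set R' := ∑ s' ∈ univ.erase s, r s' with hR'
  have hR'0 : 0 ≤ R' := Finset.sum_nonneg fun t _ => le_trans hRmin.le (hr t).1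
  set M := A.sup' ⟨s, hs⟩ (fun t => ∑ v ∈ B ∩ bd t, σ v) with hM
  have hle : ∑ v ∈ B ∩ bd s, σ v ≤ M := Finset.le_sup' (fun t => ∑ v ∈ B ∩ bd t, σ v) hs
  have hpos : 0 < α s * β := mul_pos hα0 hβ
  have h1 : ζ * R' + M ≤ α s * β * r s := by
    rw [ge_iff_le, div_le_iff₀ hpos] at hrs
    linarith
  have h2 : α s * β * r s - ζ * R' ≤ α s * (β * r s - ζ * R') := by
    have : α s * (ζ * R') ≤ 1 * (ζ * R') :=
      mul_le_mul_of_nonneg_right hα1 (by positivity)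
    nlinarith
  have h3 := helastic s
  nlinarith
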